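/- arXiv:2506.01083 — 2 statements merged into one kernel-verified Lean document; each statement's English description precedes it below -/
import Mathlib

section
/- Define the zeroth-order operator K̃_k(ψ)(y_k, x_k) = ∫∫ N(y_k; A_{k-1} y_{k-1}, Σ_{k-1}) ψ(y_{k-1}, x_{k-1}) N(x_{k-1}; x_k, C_k) dy_{k-1} dx_{k-1}, and let f(y | x) = N(y; H x + b, R). Then the k-fold composition satisfies K̃_k ∘ ⋯ ∘ K̃_1 (f)(y_k, x_k) = N(y_k; F_k x_k + z_k, Ω_k), where F_k = S_0^k H, z_k = S_0^k b, with semigroup S_m^n = A_{n-1} ⋯ A_m, and Ω_k is given by the recursion Ω_0 = R, Ω_k = A_{k-1}(F_{k-1} C_k F_{k-1}ᵀ + Ω_{k-1}) A_{k-1}ᵀ + Σ_{k-1}. -/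
open MeasureTheory Matrix Real

/-- Multivariate Gaussian density `N(x; μ, P)` on `ℝ^n`. -/
noncomputable def gpdf {n : ℕ} (x μ : Fin n → ℝ) (P : Matrix (Fin n) (Fin n) ℝ) : ℝ :=
  (Real.sqrt ((2 * Real.pi) ^ n * P.det))⁻¹ *
    Real.exp (-(1 / 2) * ((x - μ) ⬝ᵥ (P⁻¹ *ᵥ (x - μ))))

/-- The `k`-fold composition `K̃_k ∘ ⋯ ∘ K̃_1` of the zeroth-order operators, where
`K̃_k(ψ)(y_k, x_k) = ∫∫ N(y_k; A_{k-1} y_{k-1}, Σ_{k-1}) ψ(y_{k-1}, x_{k-1})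
N(x_{k-1}; x_k, C_k) dy_{k-1} dx_{k-1}`. -/
noncomputable def gtwist {c d : ℕ}
    (A Sg : ℕ → Matrix (Fin c) (Fin c) ℝ)
    (C : ℕ → Matrix (Fin d) (Fin d) ℝ)
    (f : (Fin c → ℝ) → (Fin d → ℝ) → ℝ) : ℕ → (Fin c → ℝ) → (Fin d → ℝ) → ℝ
  | 0 => f
  | k + 1 => fun y x =>
      ∫ y', ∫ x', gpdf y (A k *ᵥ y') (Sg k) * gtwist A Sg C f k y' x' *
        gpdf x' x (C (k + 1))

/-- The semigroup `S_0^k = A_{k-1} ⋯ A_0`. -/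
noncomputable def S0 {c : ℕ} (A : ℕ → Matrix (Fin c) (Fin c) ℝ) :
    ℕ → Matrix (Fin c) (Fin c) ℝ
  | 0 => 1
  | k + 1 => A k * S0 A k

/-- The covariance recursion `Ω_0 = R`,
`Ω_k = A_{k-1} (F_{k-1} C_k F_{k-1}ᵀ + Ω_{k-1}) A_{k-1}ᵀ + Σ_{k-1}` with `F_k = S_0^k H`. -/
noncomputable def Ωseq {c d : ℕ} (A Sg : ℕ → Matrix (Fin c) (Fin c) ℝ)
    (C : ℕ → Matrix (Fin d) (Fin d) ℝ) (H : Matrix (Fin c) (Fin d) ℝ)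
    (R : Matrix (Fin c) (Fin c) ℝ) : ℕ → Matrix (Fin c) (Fin c) ℝ
  | 0 => R
  | k + 1 => A k * ((S0 A k * H) * C (k + 1) * (S0 A k * H)ᵀ + Ωseq A Sg C H R k) *
      (A k)ᵀ + Sg k


section Aux

open MeasureTheory Matrix Real

private lemma sqrt_pow_nat {a : ℝ} (ha : 0 ≤ a) (n : ℕ) :
    Real.sqrt a ^ n = Real.sqrt (a ^ n) := by
  induction n with
  | zero => simp
  | succ n ih => rw [pow_succ, pow_succ, Real.sqrt_mul (by positivity), ih]

private lemma gauss_std (n : ℕ) :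
    ∫ x : Fin n → ℝ, Real.exp (-(1/2) * (x ⬝ᵥ x)) = Real.sqrt ((2*π)^n) := by
  have h : ∀ x : Fin n → ℝ, Real.exp (-(1/2) * (x ⬝ᵥ x))
      = ∏ i, Real.exp (-(1/2) * (x i * x i)) := by
    intro x
    rw [← Real.exp_sum]
    congr 1
    simp [dotProduct, Finset.mul_sum]
  simp_rw [h]
  have hpow := MeasureTheory.integral_fintype_prod_eq_pow (ι := Fin n) (fun t : ℝ => Real.exp (-(1/2) * (t*t))) (μ := volume)
  rw [← MeasureTheory.volume_pi] at hpow
  rw [hpow]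
  have h1 : ∫ t : ℝ, Real.exp (-(1/2) * (t*t)) = Real.sqrt (2*π) := by
    have := integral_gaussian (1/2)
    simp_rw [← sq, neg_mul] at this ⊢
    rw [this]
    rw [div_div_eq_mul_div, div_one, mul_comm]
  rw [h1, Fintype.card_fin, sqrt_pow_nat (by positivity)]

private lemma change_var {n : ℕ} (B : Matrix (Fin n) (Fin n) ℝ) (hB : B.det ≠ 0)
    (f : (Fin n → ℝ) → ℝ) (hf : Continuous f) :
    ∫ x, f (B *ᵥ x) = |B.det|⁻¹ * ∫ y, f y := by
  have hdet : LinearMap.det (Matrix.toLin' B) = B.det := by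
    rw [← LinearMap.det_toMatrix (Pi.basisFun ℝ (Fin n))]
    congr 1
    ext i j
    simp [Matrix.toLin'_apply, LinearMap.toMatrix_apply, Matrix.mulVec, dotProduct, Pi.single_apply]
  have hmap : Measure.map (Matrix.toLin' B) volume
      = ENNReal.ofReal |(B.det)⁻¹| • volume := by
    rw [Measure.map_linearMap_addHaar_eq_smul_addHaar volume (by rw [hdet]; exact hB), hdet]
  have hL : Measurable (Matrix.toLin' B) :=
    (Matrix.toLin' B).continuous_of_finiteDimensional.measurable
  calc ∫ x, f (B *ᵥ x) = ∫ x, f (Matrix.toLin' B x) := by simp [Matrix.toLin'_apply]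
    _ = ∫ y, f y ∂(Measure.map (Matrix.toLin' B) volume) :=
        (integral_map hL.aemeasurable hf.aestronglyMeasurable).symm
    _ = |B.det|⁻¹ * ∫ y, f y := by
        rw [hmap, integral_smul_measure, ENNReal.toReal_ofReal (by positivity), abs_inv]
        simp [smul_eq_mul]

private lemma cont_quad {n : ℕ} :
    Continuous (fun y : Fin n → ℝ => Real.exp (-(1/2) * (y ⬝ᵥ y))) := by
  apply Real.continuous_exp.comp
  apply Continuous.mul continuous_const
  exact continuous_finset_sum _ fun i _ => (continuous_apply i).mul (continuous_apply i)

open scoped MatrixOrder in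
private lemma gauss_posdef {n : ℕ} {T : Matrix (Fin n) (Fin n) ℝ} (hT : T.PosDef) :
    ∫ x : Fin n → ℝ, Real.exp (-(1/2) * (x ⬝ᵥ T *ᵥ x)) = Real.sqrt ((2*π)^n / T.det) := by
  set B := CFC.sqrt T with hBdef
  have hBB : B * B = T := CFC.sqrt_mul_sqrt_self T hT.posSemidef.nonneg
  have hBsym : Bᵀ = B := by
    have := (CFC.sqrt_nonneg T).posSemidef.1
    rwa [Matrix.IsHermitian, Matrix.conjTranspose_eq_transpose_of_trivial] at this
  have hdet2 : B.det * B.det = T.det := by rw [← Matrix.det_mul, hBB]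
  have hdetnn : 0 ≤ B.det := by
    have hH := (CFC.sqrt_nonneg T).posSemidef
    rw [hH.1.det_eq_prod_eigenvalues]
    exact Finset.prod_nonneg fun i _ => hH.eigenvalues_nonneg i
  have hdetT : 0 < T.det := hT.det_pos
  have hdetB : 0 < B.det := by nlinarith
  have hquad : ∀ x : Fin n → ℝ, x ⬝ᵥ T *ᵥ x = (B *ᵥ x) ⬝ᵥ (B *ᵥ x) := by
    intro x
    rw [← hBB, ← Matrix.mulVec_mulVec, Matrix.dotProduct_mulVec x B, ← Matrix.mulVec_transpose,
      hBsym]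
  simp_rw [hquad]
  rw [change_var B hdetB.ne' _ cont_quad, gauss_std]
  rw [abs_of_pos hdetB]
  rw [Real.sqrt_div (by positivity : (0:ℝ) ≤ (2*π)^n), ← hdet2, Real.sqrt_mul_self hdetnn,
    inv_mul_eq_div]

private lemma gauss_posdef_shift {n : ℕ} {T : Matrix (Fin n) (Fin n) ℝ} (hT : T.PosDef)
    (μ : Fin n → ℝ) :
    ∫ x : Fin n → ℝ, Real.exp (-(1/2) * ((x - μ) ⬝ᵥ T *ᵥ (x - μ)))
      = Real.sqrt ((2*π)^n / T.det) := by
  rw [← gauss_posdef hT]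
  exact integral_sub_right_eq_self (fun x => Real.exp (-(1/2) * (x ⬝ᵥ T *ᵥ x))) μ

private lemma sym_of_posdef {m : ℕ} {G : Matrix (Fin m) (Fin m) ℝ} (hG : G.PosDef) : Gᵀ = G := by
  have := hG.isHermitian
  rwa [Matrix.IsHermitian, Matrix.conjTranspose_eq_transpose_of_trivial] at this

private lemma dot_shift {m k : ℕ} (A : Matrix (Fin m) (Fin k) ℝ) (x : Fin m → ℝ)
    (y : Fin k → ℝ) : x ⬝ᵥ A *ᵥ y = (Aᵀ *ᵥ x) ⬝ᵥ y := by
  rw [Matrix.dotProduct_mulVec, Matrix.mulVec_transpose]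

variable {cc n : ℕ} {P : Matrix (Fin cc) (Fin cc) ℝ} {Q : Matrix (Fin n) (Fin n) ℝ}

private lemma posdef_T (hP : P.PosDef) (hQ : Q.PosDef) (M : Matrix (Fin cc) (Fin n) ℝ) :
    (Mᵀ * P⁻¹ * M + Q⁻¹).PosDef := by
  have h1 : (Mᵀ * P⁻¹ * M).PosSemidef := by
    have := hP.inv.posSemidef.conjTranspose_mul_mul_same M
    rwa [Matrix.conjTranspose_eq_transpose_of_trivial] at this
  exact Matrix.PosDef.posSemidef_add h1 hQ.inv

private lemma posdef_S (hP : P.PosDef) (hQ : Q.PosDef) (M : Matrix (Fin cc) (Fin n) ℝ) :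
    (M * Q * Mᵀ + P).PosDef := by
  have h1 : (M * Q * Mᵀ).PosSemidef := by
    have := hQ.posSemidef.mul_mul_conjTranspose_same M
    rwa [Matrix.conjTranspose_eq_transpose_of_trivial] at this
  exact Matrix.PosDef.posSemidef_add h1 hP

private lemma woodbury (hP : P.PosDef) (hQ : Q.PosDef) (M : Matrix (Fin cc) (Fin n) ℝ) :
    (M * Q * Mᵀ + P)⁻¹ = P⁻¹ - P⁻¹ * M * (Mᵀ * P⁻¹ * M + Q⁻¹)⁻¹ * Mᵀ * P⁻¹ := by
  set T := Mᵀ * P⁻¹ * M + Q⁻¹ with hTdef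
  have hT : T.PosDef := posdef_T hP hQ M
  have hPi : P * P⁻¹ = 1 := Matrix.mul_nonsing_inv P hP.det_pos.ne'.isUnit
  have hQi : Q * Q⁻¹ = 1 := Matrix.mul_nonsing_inv Q hQ.det_pos.ne'.isUnit
  have hTi : T * T⁻¹ = 1 := Matrix.mul_nonsing_inv T hT.det_pos.ne'.isUnit
  apply Matrix.inv_eq_right_inv
  have hMPM : Mᵀ * P⁻¹ * M = T - Q⁻¹ := by rw [hTdef, add_sub_cancel_right]
  have e1 : M * Q * Mᵀ * P⁻¹ * M * T⁻¹ = M * Q - M * T⁻¹ := by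
    have : M * Q * Mᵀ * P⁻¹ * M = M * Q * (Mᵀ * P⁻¹ * M) := by
      simp only [Matrix.mul_assoc]
    rw [this, hMPM, Matrix.mul_sub, Matrix.sub_mul]
    congr 1
    · rw [Matrix.mul_assoc, hTi, Matrix.mul_one]
    · rw [Matrix.mul_assoc M Q Q⁻¹, hQi, Matrix.mul_one]
  have e2 : M * Q * Mᵀ * (P⁻¹ * M * T⁻¹ * Mᵀ * P⁻¹)
      = M * Q * Mᵀ * P⁻¹ - M * T⁻¹ * Mᵀ * P⁻¹ := by
    have : M * Q * Mᵀ * (P⁻¹ * M * T⁻¹ * Mᵀ * P⁻¹)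
        = M * Q * Mᵀ * P⁻¹ * M * T⁻¹ * (Mᵀ * P⁻¹) := by simp only [Matrix.mul_assoc]
    rw [this, e1, Matrix.sub_mul]
    simp only [Matrix.mul_assoc]
  have e3 : P * (P⁻¹ * M * T⁻¹ * Mᵀ * P⁻¹) = M * T⁻¹ * Mᵀ * P⁻¹ := by
    have : P * (P⁻¹ * M * T⁻¹ * Mᵀ * P⁻¹) = P * P⁻¹ * (M * T⁻¹ * Mᵀ * P⁻¹) := by
      simp only [Matrix.mul_assoc]
    rw [this, hPi, Matrix.one_mul]
  rw [Matrix.add_mul, Matrix.mul_sub, Matrix.mul_sub, e2, e3, hPi]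
  abel

private lemma det_S (hP : P.PosDef) (hQ : Q.PosDef) (M : Matrix (Fin cc) (Fin n) ℝ) :
    (M * Q * Mᵀ + P).det = P.det * Q.det * (Mᵀ * P⁻¹ * M + Q⁻¹).det := by
  have hPi : P * P⁻¹ = 1 := Matrix.mul_nonsing_inv P hP.det_pos.ne'.isUnit
  have hQi : Q * Q⁻¹ = 1 := Matrix.mul_nonsing_inv Q hQ.det_pos.ne'.isUnit
  have h1 : M * Q * Mᵀ + P = P * (1 + P⁻¹ * M * (Q * Mᵀ)) := by
    rw [Matrix.mul_add, Matrix.mul_one, add_comm]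
    congr 1
    have : P * (P⁻¹ * M * (Q * Mᵀ)) = P * P⁻¹ * (M * (Q * Mᵀ)) := by
      simp only [Matrix.mul_assoc]
    rw [this, hPi, Matrix.one_mul, ← Matrix.mul_assoc]
  have h2 : 1 + Q * Mᵀ * (P⁻¹ * M) = Q * (Mᵀ * P⁻¹ * M + Q⁻¹) := by
    rw [Matrix.mul_add, hQi, add_comm]
    congr 1
    simp only [Matrix.mul_assoc]
  rw [h1, Matrix.det_mul, Matrix.det_one_add_mul_comm, h2, Matrix.det_mul]
  ring

private lemma quad_complete (hP : P.PosDef) (hQ : Q.PosDef) (M : Matrix (Fin cc) (Fin n) ℝ)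
    (w : Fin cc → ℝ) (v : Fin n → ℝ) :
    (w - M *ᵥ v) ⬝ᵥ P⁻¹ *ᵥ (w - M *ᵥ v) + v ⬝ᵥ Q⁻¹ *ᵥ v
      = (v - (Mᵀ * P⁻¹ * M + Q⁻¹)⁻¹ *ᵥ (Mᵀ *ᵥ (P⁻¹ *ᵥ w))) ⬝ᵥ
          (Mᵀ * P⁻¹ * M + Q⁻¹) *ᵥ (v - (Mᵀ * P⁻¹ * M + Q⁻¹)⁻¹ *ᵥ (Mᵀ *ᵥ (P⁻¹ *ᵥ w)))
        + w ⬝ᵥ (M * Q * Mᵀ + P)⁻¹ *ᵥ w := by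
  set T := Mᵀ * P⁻¹ * M + Q⁻¹ with hTdef
  have hT : T.PosDef := posdef_T hP hQ M
  have hTi : T * T⁻¹ = 1 := Matrix.mul_nonsing_inv T hT.det_pos.ne'.isUnit
  have hPs : P⁻¹ᵀ = P⁻¹ := sym_of_posdef hP.inv
  have hTs : Tᵀ = T := sym_of_posdef hT
  set a := Mᵀ *ᵥ (P⁻¹ *ᵥ w) with hadef
  set u := T⁻¹ *ᵥ a with hudef
  have g1 : w ⬝ᵥ P⁻¹ *ᵥ (M *ᵥ v) = a ⬝ᵥ v := by
    rw [dot_shift P⁻¹, hPs, dot_shift M]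
  have g2 : (M *ᵥ v) ⬝ᵥ P⁻¹ *ᵥ w = a ⬝ᵥ v := by
    rw [dotProduct_comm, dot_shift M]
  have g3 : (M *ᵥ v) ⬝ᵥ P⁻¹ *ᵥ (M *ᵥ v) = v ⬝ᵥ (Mᵀ * P⁻¹ * M) *ᵥ v := by
    rw [dot_shift P⁻¹, hPs, Matrix.mulVec_mulVec, dot_shift M, Matrix.mulVec_mulVec,
      dotProduct_comm, ← Matrix.mul_assoc]
  have g5 : T *ᵥ u = a := by rw [hudef, Matrix.mulVec_mulVec, hTi, Matrix.one_mulVec]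
  have g6 : v ⬝ᵥ T *ᵥ u = a ⬝ᵥ v := by rw [g5, dotProduct_comm]
  have g7 : u ⬝ᵥ T *ᵥ v = a ⬝ᵥ v := by rw [dot_shift, hTs, g5]
  have hN : a = (Mᵀ * P⁻¹) *ᵥ w := by rw [hadef, Matrix.mulVec_mulVec]
  have g8 : u ⬝ᵥ T *ᵥ u = w ⬝ᵥ (P⁻¹ * M * T⁻¹ * Mᵀ * P⁻¹) *ᵥ w := by
    rw [g5, dotProduct_comm, hudef]
    nth_rewrite 2 [hN]
    rw [Matrix.mulVec_mulVec]
    nth_rewrite 1 [hN]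
    rw [dotProduct_comm, dot_shift (Mᵀ * P⁻¹), Matrix.mulVec_mulVec,
      dotProduct_comm]
    congr 2
    rw [Matrix.transpose_mul, Matrix.transpose_transpose, hPs]
    simp only [Matrix.mul_assoc]
  have g9 : w ⬝ᵥ (M * Q * Mᵀ + P)⁻¹ *ᵥ w
      = w ⬝ᵥ P⁻¹ *ᵥ w - w ⬝ᵥ (P⁻¹ * M * T⁻¹ * Mᵀ * P⁻¹) *ᵥ w := by
    rw [woodbury hP hQ M, Matrix.sub_mulVec, dotProduct_sub, ← hTdef]
  have g4 : v ⬝ᵥ T *ᵥ v = v ⬝ᵥ (Mᵀ * P⁻¹ * M) *ᵥ v + v ⬝ᵥ Q⁻¹ *ᵥ v := by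
    rw [hTdef, Matrix.add_mulVec, dotProduct_add]
  simp only [Matrix.mulVec_sub, sub_dotProduct, dotProduct_sub]
  rw [g1, g2, g3, g6, g7, g8, g9, g4]
  ring

private lemma gauss_conv (hP : P.PosDef) (hQ : Q.PosDef) (M : Matrix (Fin cc) (Fin n) ℝ)
    (y m : Fin cc → ℝ) (ν : Fin n → ℝ) :
    (∫ u : Fin n → ℝ, gpdf y (M *ᵥ u + m) P * gpdf u ν Q)
      = gpdf y (M *ᵥ ν + m) (M * Q * Mᵀ + P) := by
  set T := Mᵀ * P⁻¹ * M + Q⁻¹ with hTdef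
  have hT : T.PosDef := posdef_T hP hQ M
  have hS : (M * Q * Mᵀ + P).PosDef := posdef_S hP hQ M
  set w := y - (M *ᵥ ν + m) with hwdef
  set uh := T⁻¹ *ᵥ (Mᵀ *ᵥ (P⁻¹ *ᵥ w)) with huhdef
  have pointwise : ∀ u : Fin n → ℝ,
      gpdf y (M *ᵥ u + m) P * gpdf u ν Q
        = ((Real.sqrt ((2*π) ^ cc * P.det))⁻¹ * (Real.sqrt ((2*π) ^ n * Q.det))⁻¹ *
            Real.exp (-(1/2) * (w ⬝ᵥ (M * Q * Mᵀ + P)⁻¹ *ᵥ w)))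
          * Real.exp (-(1/2) * ((u - (ν + uh)) ⬝ᵥ T *ᵥ (u - (ν + uh)))) := by
    intro u
    have harg : y - (M *ᵥ u + m) = w - M *ᵥ (u - ν) := by
      rw [hwdef, Matrix.mulVec_sub]
      abel
    have harg2 : u - (ν + uh) = (u - ν) - uh := by abel
    have hq : -(1/2) * ((w - M *ᵥ (u - ν)) ⬝ᵥ P⁻¹ *ᵥ (w - M *ᵥ (u - ν)))
        + -(1/2) * ((u - ν) ⬝ᵥ Q⁻¹ *ᵥ (u - ν))
        = -(1/2) * (w ⬝ᵥ (M * Q * Mᵀ + P)⁻¹ *ᵥ w)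
          + -(1/2) * (((u - ν) - uh) ⬝ᵥ T *ᵥ ((u - ν) - uh)) := by
      have hqc := quad_complete hP hQ M w (u - ν)
      rw [← hTdef] at hqc
      rw [huhdef]
      linarith [hqc]
    rw [gpdf, gpdf, harg, harg2, mul_mul_mul_comm, ← Real.exp_add, hq, Real.exp_add]
    ring
  rw [MeasureTheory.integral_congr_ae (Filter.Eventually.of_forall pointwise),
    MeasureTheory.integral_const_mul, gauss_posdef_shift hT (ν + uh), gpdf, ← hwdef,
    det_S hP hQ M, ← hTdef]
  have h2π : (0:ℝ) < 2 * π := by positivity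
  have hPd := hP.det_pos
  have hQd := hQ.det_pos
  have hTd := hT.det_pos
  rw [Real.sqrt_mul (by positivity) P.det, Real.sqrt_mul (by positivity) Q.det,
    Real.sqrt_div (by positivity) T.det,
    show (2*π) ^ cc * (P.det * Q.det * T.det) = ((2*π)^cc * P.det) * (Q.det * T.det) by ring,
    Real.sqrt_mul (by positivity), Real.sqrt_mul (by positivity) T.det,
    Real.sqrt_mul (by positivity) P.det]
  have e1 : Real.sqrt ((2*π)^cc) > 0 := by positivity
  have e2 : Real.sqrt ((2*π)^n) > 0 := by positivity
  have e3 : Real.sqrt P.det > 0 := Real.sqrt_pos.mpr hPd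
  have e4 : Real.sqrt Q.det > 0 := Real.sqrt_pos.mpr hQd
  have e5 : Real.sqrt T.det > 0 := Real.sqrt_pos.mpr hTd
  field_simp

private lemma omega_posdef {c d : ℕ} (A Sg : ℕ → Matrix (Fin c) (Fin c) ℝ)
    (C : ℕ → Matrix (Fin d) (Fin d) ℝ) (H : Matrix (Fin c) (Fin d) ℝ)
    (R : Matrix (Fin c) (Fin c) ℝ)
    (hR : R.PosDef) (hSg : ∀ k, (Sg k).PosDef) (hC : ∀ k, (C k).PosDef) :
    ∀ k, (Ωseq A Sg C H R k).PosDef := by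
  intro k
  induction k with
  | zero => exact hR
  | succ k ih =>
      have hX : ((S0 A k * H) * C (k+1) * (S0 A k * H)ᵀ + Ωseq A Sg C H R k).PosDef :=
        posdef_S ih (hC (k+1)) (S0 A k * H)
      have h1 : (A k * ((S0 A k * H) * C (k+1) * (S0 A k * H)ᵀ + Ωseq A Sg C H R k) *
          (A k)ᵀ).PosSemidef := by
        have := hX.posSemidef.mul_mul_conjTranspose_same (A k)
        rwa [Matrix.conjTranspose_eq_transpose_of_trivial] at this
      exact Matrix.PosDef.posSemidef_add h1 (hSg k)

end Aux

/-- Sequential zeroth-order twisting approximation: with `f(y|x) = N(y; H x + b, R)`,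
`K̃_k ∘ ⋯ ∘ K̃_1 (f)(y_k, x_k) = N(y_k; F_k x_k + z_k, Ω_k)` with `F_k = S_0^k H`,
`z_k = S_0^k b`, and `Ω_k` given by the recursion. -/
theorem stmt3 {c d : ℕ}
    (A Sg : ℕ → Matrix (Fin c) (Fin c) ℝ)
    (C : ℕ → Matrix (Fin d) (Fin d) ℝ)
    (H : Matrix (Fin c) (Fin d) ℝ) (b : Fin c → ℝ) (R : Matrix (Fin c) (Fin c) ℝ)
    (hR : R.PosDef) (hSg : ∀ k, (Sg k).PosDef) (hC : ∀ k, (C k).PosDef) :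
    ∀ k (y : Fin c → ℝ) (x : Fin d → ℝ),
      gtwist A Sg C (fun y0 x0 => gpdf y0 (H *ᵥ x0 + b) R) k y x =
        gpdf y ((S0 A k * H) *ᵥ x + S0 A k *ᵥ b) (Ωseq A Sg C H R k) := by
  intro k
  induction k with
  | zero =>
      intro y x
      simp [gtwist, S0, Ωseq, Matrix.one_mul, Matrix.one_mulVec]
  | succ k ih =>
      intro y x
      have hΩ : (Ωseq A Sg C H R k).PosDef := omega_posdef A Sg C H R hR hSg hC k
      have hSig2 : ((S0 A k * H) * C (k+1) * (S0 A k * H)ᵀ + Ωseq A Sg C H R k).PosDef :=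
        posdef_S hΩ (hC (k+1)) (S0 A k * H)
      have inner : ∀ y' : Fin c → ℝ,
          (∫ x' : Fin d → ℝ, gpdf y (A k *ᵥ y') (Sg k) *
              gtwist A Sg C (fun y0 x0 => gpdf y0 (H *ᵥ x0 + b) R) k y' x' *
              gpdf x' x (C (k + 1)))
            = gpdf y (A k *ᵥ y') (Sg k) *
                gpdf y' ((S0 A k * H) *ᵥ x + S0 A k *ᵥ b)
                  ((S0 A k * H) * C (k+1) * (S0 A k * H)ᵀ + Ωseq A Sg C H R k) := by
        intro y'
        have step1 : ∀ x' : Fin d → ℝ,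
            gpdf y (A k *ᵥ y') (Sg k) *
                gtwist A Sg C (fun y0 x0 => gpdf y0 (H *ᵥ x0 + b) R) k y' x' *
                gpdf x' x (C (k + 1))
              = gpdf y (A k *ᵥ y') (Sg k) *
                  (gpdf y' ((S0 A k * H) *ᵥ x' + S0 A k *ᵥ b) (Ωseq A Sg C H R k) *
                    gpdf x' x (C (k + 1))) := by
          intro x'
          rw [ih y' x']
          ring
        rw [MeasureTheory.integral_congr_ae (Filter.Eventually.of_forall step1),
          MeasureTheory.integral_const_mul,
          gauss_conv hΩ (hC (k+1)) (S0 A k * H) y' (S0 A k *ᵥ b) x]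
      show (∫ y' : Fin c → ℝ, ∫ x' : Fin d → ℝ, gpdf y (A k *ᵥ y') (Sg k) *
          gtwist A Sg C (fun y0 x0 => gpdf y0 (H *ᵥ x0 + b) R) k y' x' *
          gpdf x' x (C (k + 1))) = _
      rw [MeasureTheory.integral_congr_ae (Filter.Eventually.of_forall inner)]
      have step2 : ∀ y' : Fin c → ℝ,
          gpdf y (A k *ᵥ y') (Sg k) *
              gpdf y' ((S0 A k * H) *ᵥ x + S0 A k *ᵥ b)
                ((S0 A k * H) * C (k+1) * (S0 A k * H)ᵀ + Ωseq A Sg C H R k)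
            = gpdf y (A k *ᵥ y' + 0) (Sg k) *
              gpdf y' ((S0 A k * H) *ᵥ x + S0 A k *ᵥ b)
                ((S0 A k * H) * C (k+1) * (S0 A k * H)ᵀ + Ωseq A Sg C H R k) := by
        intro y'; rw [add_zero]
      rw [MeasureTheory.integral_congr_ae (Filter.Eventually.of_forall step2),
        gauss_conv (hSg k) hSig2 (A k) y 0 ((S0 A k * H) *ᵥ x + S0 A k *ᵥ b)]
      have hmean : A k *ᵥ ((S0 A k * H) *ᵥ x + S0 A k *ᵥ b) + 0
          = (S0 A (k+1) * H) *ᵥ x + S0 A (k+1) *ᵥ b := by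
        rw [add_zero, Matrix.mulVec_add, Matrix.mulVec_mulVec, Matrix.mulVec_mulVec]
        show (A k * (S0 A k * H)) *ᵥ x + (A k * S0 A k) *ᵥ b = _
        rw [show S0 A (k+1) = A k * S0 A k from rfl, Matrix.mul_assoc]
      rw [hmean]
      rfl
end

section
/- Suppose A ∈ ℝ^{c×c} and Σ ∈ ℝ^{c×c} satisfy A Aᵀ + Σ = I (so the AR(1) map y ↦ A y + noise leaves N(0, I) invariant), and the spectral radius of A is strictly less than 1. Let C be a fixed matrix and define the recursion F_k = A F_{k-1}, Ω_k = A (F_{k-1} C F_{k-1}ᵀ + Ω_{k-1}) Aᵀ + Σ with F_0 = H, Ω_0 = R. Then F_k → 0 and Ω_k → I as k → ∞. -/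
open Matrix Filter
open scoped NNReal ENNReal

section aux

attribute [local instance] Matrix.linftyOpNormedRing Matrix.linftyOpNormedAlgebra

lemma aux_entry_le {c : ℕ} (M : Matrix (Fin c) (Fin c) ℂ) (i j : Fin c) :
    ‖M i j‖₊ ≤ ‖M‖₊ := by
  rw [Matrix.linfty_opNNNorm_def]
  refine le_trans ?_ (Finset.le_sup (Finset.mem_univ i))
  exact Finset.single_le_sum (f := fun k => ‖M i k‖₊) (fun k _ => zero_le) (Finset.mem_univ j)

lemma aux_pow {c : ℕ} (A : Matrix (Fin c) (Fin c) ℝ)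
    (hspec : ∀ z ∈ spectrum ℂ (A.map (algebraMap ℝ ℂ)), ‖z‖ < 1) :
    ∃ r : ℝ, 0 < r ∧ r < 1 ∧ ∀ᶠ n : ℕ in atTop, ∀ i j, |(A ^ n) i j| ≤ r ^ n := by
  set B := A.map (algebraMap ℝ ℂ) with hB
  have hρ : spectralRadius ℂ B < 1 := by
    rcases (spectrum ℂ B).eq_empty_or_nonempty with h | h
    · simp [spectralRadius, h]
    · have := spectrum.spectralRadius_lt_of_forall_lt_of_nonempty h
        (r := 1) (fun k hk => by exact_mod_cast hspec k hk)
      simpa using this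
  obtain ⟨ε, hρε, hε1⟩ := exists_between hρ
  have hεtop : ε ≠ ⊤ := (hε1.trans_le le_top).ne
  have hε0 : 0 < ε := zero_le.trans_lt hρε
  set r : ℝ := ε.toReal with hr
  have hr0 : 0 < r := ENNReal.toReal_pos hε0.ne' hεtop
  have hr1 : r < 1 := by
    rw [hr, ← ENNReal.toReal_one]
    exact ENNReal.toReal_strict_mono ENNReal.one_ne_top hε1
  refine ⟨r, hr0, hr1, ?_⟩
  have T := spectrum.pow_nnnorm_pow_one_div_tendsto_nhds_spectralRadius B
  have hev : ∀ᶠ n : ℕ in atTop, ((‖B ^ n‖₊ : ℝ≥0∞) ^ (1 / (n : ℝ))) < ε :=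
    T.eventually_lt_const hρε
  filter_upwards [hev, eventually_ge_atTop 1] with n hn hn1 i j
  -- from nnnorm bound to entries
  have hBn : (‖B ^ n‖₊ : ℝ≥0∞) < ε ^ n := by
    have hnne : ((n:ℝ)) ≠ 0 := by positivity
    have h2 := ENNReal.rpow_lt_rpow hn (by positivity : (0:ℝ) < (n : ℝ))
    rw [← ENNReal.rpow_mul, one_div, inv_mul_cancel₀ hnne, ENNReal.rpow_one] at h2
    rw [← ENNReal.rpow_natCast ε]
    exact h2
  have hentry : (‖(B ^ n) i j‖₊ : ℝ≥0∞) ≤ ε ^ n := by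
    exact_mod_cast le_trans (by exact_mod_cast aux_entry_le (B ^ n) i j) hBn.le
  have hmap : B ^ n = (A ^ n).map (algebraMap ℝ ℂ) := by
    rw [hB, ← RingHom.mapMatrix_apply, ← RingHom.mapMatrix_apply, map_pow]
  have hval : ‖(B ^ n) i j‖ = |(A ^ n) i j| := by
    rw [hmap]
    simp [Matrix.map_apply, Complex.norm_real]
  have : (‖(B ^ n) i j‖₊ : ℝ) ≤ (ε ^ n).toReal := by
    have := ENNReal.toReal_mono (by simp [hεtop]) hentry
    simpa using this
  rw [coe_nnnorm, hval] at this
  calc |(A ^ n) i j| ≤ (ε ^ n).toReal := this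
    _ = r ^ n := by rw [ENNReal.toReal_pow]

end aux

/-- If `A Aᵀ + Σ = I` (so the AR(1) map leaves `N(0, I)` invariant) and the spectral
radius of `A` is strictly less than `1`, then the recursions `F_k = A F_{k-1}` and
`Ω_k = A (F_{k-1} C F_{k-1}ᵀ + Ω_{k-1}) Aᵀ + Σ` with `F_0 = H`, `Ω_0 = R` satisfy
`F_k → 0` and `Ω_k → I` as `k → ∞`. -/
theorem stmt5 {c d : ℕ}
    (A Sg R : Matrix (Fin c) (Fin c) ℝ)
    (C : Matrix (Fin d) (Fin d) ℝ) (H : Matrix (Fin c) (Fin d) ℝ)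
    (hSg : Sg.PosSemidef) (hC : C.PosSemidef) (hR : R.PosSemidef)
    (hstat : A * Aᵀ + Sg = 1)
    (hspec : ∀ z ∈ spectrum ℂ (A.map (algebraMap ℝ ℂ)), ‖z‖ < 1)
    (F : ℕ → Matrix (Fin c) (Fin d) ℝ) (Ω : ℕ → Matrix (Fin c) (Fin c) ℝ)
    (hF0 : F 0 = H) (hΩ0 : Ω 0 = R)
    (hF : ∀ k, F (k + 1) = A * F k)
    (hΩ : ∀ k, Ω (k + 1) = A * (F k * C * (F k)ᵀ + Ω k) * Aᵀ + Sg) :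
    Tendsto F atTop (nhds 0) ∧ Tendsto Ω atTop (nhds 1) := by
  have hAAT : A * Aᵀ = 1 - Sg := eq_sub_of_add_eq hstat
  have hFk : ∀ k, F k = A ^ k * H := by
    intro k
    induction k with
    | zero => simpa using hF0
    | succ k ih => rw [hF k, ih, pow_succ', Matrix.mul_assoc]
  set M : Matrix (Fin c) (Fin c) ℝ := H * C * Hᵀ with hM
  have hΩk : ∀ k, Ω k = 1 + A ^ k * (R - 1) * (A ^ k)ᵀ
      + (k : ℝ) • (A ^ k * M * (A ^ k)ᵀ) := by
    intro k
    induction k with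
    | zero => simp [hΩ0]
    | succ k ih =>
      rw [hΩ k, ih, hFk k]
      simp only [pow_succ', transpose_mul, Nat.cast_succ, add_smul, one_smul,
        mul_add, add_mul, mul_one, one_mul, mul_smul_comm, smul_mul_assoc, hAAT, hM,
        Matrix.mul_assoc]
      abel
  obtain ⟨r, hr0, hr1, hev⟩ := aux_pow A hspec
  have hA0 : Tendsto (fun k : ℕ => A ^ k) atTop (nhds 0) := by
    refine tendsto_pi_nhds.2 ?_
    intro i
    rw [tendsto_pi_nhds]
    intro j
    have h0 : (0 : Matrix (Fin c) (Fin c) ℝ) i j = 0 := rfl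
    rw [h0]
    refine squeeze_zero_norm' ?_ (tendsto_pow_atTop_nhds_zero_of_lt_one hr0.le hr1)
    filter_upwards [hev] with n hn
    simpa [Real.norm_eq_abs] using hn i j
  have hT3 : Tendsto (fun k : ℕ => (k : ℝ) • (A ^ k * M * (A ^ k)ᵀ)) atTop (nhds 0) := by
    refine tendsto_pi_nhds.2 ?_
    intro i
    rw [tendsto_pi_nhds]
    intro j
    have h0 : (0 : Matrix (Fin c) (Fin c) ℝ) i j = 0 := rfl
    rw [h0]
    set S : ℝ := ∑ q, ∑ p, |M p q| with hS
    have hS0 : 0 ≤ S := Finset.sum_nonneg fun q _ =>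
      Finset.sum_nonneg fun p _ => abs_nonneg _
    have hrr : r * r < 1 := by nlinarith
    have hg : Tendsto (fun k : ℕ => S * ((k : ℝ) * (r * r) ^ k)) atTop (nhds 0) := by
      simpa using (tendsto_self_mul_const_pow_of_lt_one
        (by positivity : (0:ℝ) ≤ r * r) hrr).const_mul S
    refine squeeze_zero_norm' ?_ hg
    filter_upwards [hev] with k hk
    have h1 : (A ^ k * M * (A ^ k)ᵀ) i j
        = ∑ q, ∑ p, (A ^ k) i p * M p q * (A ^ k) j q := by
      simp only [Matrix.mul_apply, Matrix.transpose_apply, Finset.sum_mul]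
    have hb : |(A ^ k * M * (A ^ k)ᵀ) i j| ≤ r ^ k * r ^ k * S := by
      rw [h1]
      calc |∑ q, ∑ p, (A ^ k) i p * M p q * (A ^ k) j q|
          ≤ ∑ q, ∑ p, |(A ^ k) i p * M p q * (A ^ k) j q| :=
            (Finset.abs_sum_le_sum_abs _ _).trans
              (Finset.sum_le_sum fun q _ => Finset.abs_sum_le_sum_abs _ _)
        _ ≤ ∑ q, ∑ p, r ^ k * |M p q| * r ^ k := by
            refine Finset.sum_le_sum fun q _ => Finset.sum_le_sum fun p _ => ?_
            rw [abs_mul, abs_mul]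
            gcongr
            exacts [hk i p, hk j q]
        _ = r ^ k * r ^ k * S := by
            rw [hS, Finset.mul_sum]
            refine Finset.sum_congr rfl fun q _ => ?_
            rw [Finset.mul_sum]
            refine Finset.sum_congr rfl fun p _ => ?_
            ring
    have : ‖((k : ℝ) • (A ^ k * M * (A ^ k)ᵀ)) i j‖
        = (k : ℝ) * |(A ^ k * M * (A ^ k)ᵀ) i j| := by
      simp [Matrix.smul_apply, smul_eq_mul, Real.norm_eq_abs, abs_mul, Nat.abs_cast]
    rw [this]
    calc (k : ℝ) * |(A ^ k * M * (A ^ k)ᵀ) i j|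
        ≤ (k : ℝ) * (r ^ k * r ^ k * S) := by
          exact mul_le_mul_of_nonneg_left hb (Nat.cast_nonneg k)
      _ = S * ((k : ℝ) * (r * r) ^ k) := by rw [mul_pow]; ring
  constructor
  · have hFeq : F = fun k => A ^ k * H := funext hFk
    rw [hFeq]
    have hc : Continuous fun N : Matrix (Fin c) (Fin c) ℝ => N * H :=
      continuous_id.matrix_mul continuous_const
    have := (hc.tendsto 0).comp hA0
    simpa [Function.comp_def] using this
  · have hΩeq : Ω = fun k : ℕ => 1 + A ^ k * (R - 1) * (A ^ k)ᵀ
        + (k : ℝ) • (A ^ k * M * (A ^ k)ᵀ) := funext hΩk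
    rw [hΩeq]
    have hc : Continuous fun N : Matrix (Fin c) (Fin c) ℝ => 1 + N * (R - 1) * Nᵀ :=
      continuous_const.add ((continuous_id.matrix_mul continuous_const).matrix_mul
        continuous_id.matrix_transpose)
    have h2 := (hc.tendsto 0).comp hA0
    have h2' : Tendsto (fun k : ℕ => 1 + A ^ k * (R - 1) * (A ^ k)ᵀ) atTop (nhds 1) := by
      simpa [Function.comp_def, Matrix.transpose_pow] using h2
    simpa using h2'.add hT3
end
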